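/- Let P be a finite bounded poset. Then P is a lattice if and only if (Q(P), ⊥) is a Dacey space, i.e., every orthoclosed subset X of Q(P) satisfies X = B^⊥⊥ for every maximal pairwise orthogonal subset B of X. Equivalently, P is a lattice iff the complete ortholattice of orthoclosed subsets of Q(P) is orthomodular. -/

import Mathlib

/-- The polar (orthocomplement) of a subset: all elements orthogonal to every element of `X`. -/
def pol {O : Type*} (r : O → O → Prop) (X : Set O) : Set O := {y | ∀ x ∈ X, r y x}

/-- A set is orthoclosed if it equals its double polar. -/
def IsOC {O : Type*} (r : O → O → Prop) (X : Set O) : Prop := pol r (pol r X) = X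

/-- A basis of `X`: a maximal pairwise orthogonal subset of `X`. -/
def IsBasis {O : Type*} (r : O → O → Prop) (X B : Set O) : Prop :=
  B ⊆ X ∧ B.Pairwise r ∧ ∀ C : Set O, B ⊆ C → C ⊆ X → C.Pairwise r → C = B

/-- A Dacey set: orthoclosed and recovered as the double polar of each of its bases. -/
def IsDacey {O : Type*} (r : O → O → Prop) (X : Set O) : Prop :=
  IsOC r X ∧ ∀ B : Set O, IsBasis r X B → pol r (pol r B) = X
/-- The proper quotients of a poset `P`: pairs `(a,b)` with `a < b`. -/
abbrev Quot1 (P : Type*) [PartialOrder P] : Type _ := {p : P × P // p.1 < p.2}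

/-- `[a<b] ⊥ [c<d]` iff `b ≤ c` or `d ≤ a`. -/
def perpQ {P : Type*} [PartialOrder P] (q₁ q₂ : Quot1 P) : Prop :=
  q₁.1.2 ≤ q₂.1.1 ∨ q₂.1.2 ≤ q₁.1.1

/-- The partial order on proper quotients: `[u<v] ≤ [a<b]` iff `a ≤ u` and `v ≤ b`. -/
def leQ {P : Type*} [PartialOrder P] (q₁ q₂ : Quot1 P) : Prop :=
  q₂.1.1 ≤ q₁.1.1 ∧ q₁.1.2 ≤ q₂.1.2

/-- `τ(U)`: quotients whose top endpoint lies in `U`. -/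
def tau {P : Type*} [PartialOrder P] (U : Set P) : Set (Quot1 P) := {q | q.1.2 ∈ U}

/-- `β(U)`: quotients whose bottom endpoint lies in `U`. -/
def beta {P : Type*} [PartialOrder P] (U : Set P) : Set (Quot1 P) := {q | q.1.1 ∈ U}

theorem Set.Finite.exists_maximal_wrt {α β : Type*} [PartialOrder β] (f : α → β) (s : Set α)
    (h : s.Finite) (hs : s.Nonempty) : ∃ a ∈ s, ∀ a' ∈ s, f a ≤ f a' → f a = f a' := by
  obtain ⟨a, ha, hmax⟩ := Set.Finite.exists_maximalFor f s h hs
  exact ⟨a, ha, fun a' ha' hle => le_antisymm hle (hmax ha' hle)⟩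

section General

variable {O : Type*} {r : O → O → Prop}

lemma pol_anti {X Y : Set O} (h : X ⊆ Y) : pol r Y ⊆ pol r X :=
  fun y hy x hx => hy x (h hx)

lemma pol_empty : pol r (∅ : Set O) = Set.univ := by
  ext y; simp [pol]

lemma subset_polpol (hsymm : ∀ a b, r a b → r b a) (X : Set O) : X ⊆ pol r (pol r X) :=
  fun x hx y hy => hsymm _ _ (hy x hx)

lemma pol_pol_pol (hsymm : ∀ a b, r a b → r b a) (X : Set O) : pol r (pol r (pol r X)) = pol r X :=
  Set.Subset.antisymm (pol_anti (subset_polpol hsymm X)) (subset_polpol hsymm (pol r X))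

lemma exists_basis [Finite O] (Y B₀ : Set O) (h₀ : B₀ ⊆ Y) (hp : B₀.Pairwise r) :
    ∃ B, B₀ ⊆ B ∧ IsBasis r Y B := by
  obtain ⟨B, hB, hmax⟩ := Set.Finite.exists_maximal_wrt (id : Set O → Set O)
    {C | B₀ ⊆ C ∧ C ⊆ Y ∧ C.Pairwise r} (Set.toFinite _) ⟨B₀, le_refl _, h₀, hp⟩
  exact ⟨B, hB.1, hB.2.1, hB.2.2,
    fun C hBC hCY hCp => (hmax C ⟨hB.1.trans hBC, hCY, hCp⟩ hBC).symm⟩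

lemma basis_inter_pol_empty (hsymm : ∀ a b, r a b → r b a) (hirr : ∀ a, ¬ r a a) {Y B : Set O} (hB : IsBasis r Y B) :
    Y ∩ pol r B = ∅ := by
  by_contra h
  obtain ⟨q, hqY, hqp⟩ := Set.nonempty_iff_ne_empty.2 h
  have hqB : q ∉ B := fun hqB => hirr q (hqp q hqB)
  have hpair : (insert q B).Pairwise r := by
    rw [Set.pairwise_insert]
    exact ⟨hB.2.1, fun b hb _ => ⟨hqp b hb, hsymm _ _ (hqp b hb)⟩⟩
  have := hB.2.2 (insert q B) (Set.subset_insert _ _)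
    (Set.insert_subset_iff.2 ⟨hqY, hB.1⟩) hpair
  exact hqB (this ▸ Set.mem_insert q B)

lemma dacey_to_om [Finite O] (hsymm : ∀ a b, r a b → r b a) (hirr : ∀ a, ¬ r a a)
    (hD : ∀ X : Set O, IsOC r X → ∀ B : Set O, IsBasis r X B → pol r (pol r B) = X) :
    ∀ X Y : Set O, IsOC r X → IsOC r Y → X ⊆ Y →
      Y = pol r (pol r X ∩ pol r (Y ∩ pol r X)) := by
  intro X Y hX hY hXY
  obtain ⟨B, -, hB⟩ := exists_basis (r := r) X ∅ (Set.empty_subset _) (Set.pairwise_empty _)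
  have hpolBX : pol r B = pol r X := by
    conv_rhs => rw [← hD X hX B hB]
    exact (pol_pol_pol hsymm B).symm
  obtain ⟨D, hBD, hDb⟩ := exists_basis (r := r) Y B (hB.1.trans hXY) hB.2.1
  have hDsub : D ⊆ X ∪ (Y ∩ pol r X) := by
    intro p hpD
    by_cases hpB : p ∈ B
    · exact Or.inl (hB.1 hpB)
    · refine Or.inr ⟨hDb.1 hpD, ?_⟩
      rw [← hpolBX]
      exact fun b hb => hDb.2.1 hpD (hBD hb) (fun h => hpB (h ▸ hb))
  apply Set.Subset.antisymm
  · have h1 : pol r X ∩ pol r (Y ∩ pol r X) ⊆ pol r D := by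
      intro y hy p hpD
      rcases hDsub hpD with h | h
      · exact hy.1 p h
      · exact hy.2 p h
    calc Y = pol r (pol r D) := (hD Y hY D hDb).symm
    _ ⊆ _ := pol_anti h1
  · have h2 : pol r Y ⊆ pol r X ∩ pol r (Y ∩ pol r X) :=
      fun y hy => ⟨pol_anti hXY hy, pol_anti Set.inter_subset_left hy⟩
    calc pol r (pol r X ∩ pol r (Y ∩ pol r X)) ⊆ pol r (pol r Y) := pol_anti h2
    _ = Y := hY

lemma om_to_dacey (hsymm : ∀ a b, r a b → r b a) (hirr : ∀ a, ¬ r a a)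
    (hM : ∀ X Y : Set O, IsOC r X → IsOC r Y → X ⊆ Y →
      Y = pol r (pol r X ∩ pol r (Y ∩ pol r X))) :
    ∀ X : Set O, IsOC r X → ∀ B : Set O, IsBasis r X B → pol r (pol r B) = X := by
  intro X hX B hB
  have hZoc : IsOC r (pol r (pol r B)) := pol_pol_pol hsymm (pol r B)
  have hZX : pol r (pol r B) ⊆ X := hX ▸ pol_anti (pol_anti hB.1)
  have h := hM (pol r (pol r B)) X hZoc hX hZX
  have hpolZ : pol r (pol r (pol r B)) = pol r B := pol_pol_pol hsymm B
  rw [hpolZ] at h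
  have hE : X ∩ pol r B = ∅ := basis_inter_pol_empty hsymm hirr hB
  rw [hE, pol_empty, Set.inter_univ] at h
  exact h.symm

end General

section Perp

variable {P : Type*} [PartialOrder P]

lemma perpQ_symm : ∀ a b : Quot1 P, perpQ a b → perpQ b a := fun _ _ h => h.symm

lemma perpQ_irrefl : ∀ a : Quot1 P, ¬ perpQ a a := by
  rintro ⟨⟨x, y⟩, h⟩ (hc | hc) <;> exact absurd hc (not_le_of_gt h)

end Perp

theorem lattice_to_dacey {P : Type*} [PartialOrder P] [BoundedOrder P] [Fintype P]
    (hL : ∀ a b : P, (∃ s, IsLUB {a, b} s) ∧ (∃ i, IsGLB {a, b} i)) :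
    ∀ X : Set (Quot1 P), IsOC perpQ X →
      ∀ B : Set (Quot1 P), IsBasis perpQ X B → pol perpQ (pol perpQ B) = X := by
  classical
  choose sup hsup using fun a b : P => (hL a b).1
  choose inf hinf using fun a b : P => (hL a b).2
  have hls : ∀ a b : P, a ≤ sup a b := fun a b => (hsup a b).1 (Set.mem_insert _ _)
  have hrs : ∀ a b : P, b ≤ sup a b := fun a b =>
    (hsup a b).1 (Set.mem_insert_of_mem _ rfl)
  have hsl : ∀ a b c : P, a ≤ c → b ≤ c → sup a b ≤ c := fun a b c h1 h2 =>
    (hsup a b).2 (by rintro x (rfl | rfl) <;> assumption)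
  have hli : ∀ a b : P, inf a b ≤ a := fun a b => (hinf a b).1 (Set.mem_insert _ _)
  have hri : ∀ a b : P, inf a b ≤ b := fun a b =>
    (hinf a b).1 (Set.mem_insert_of_mem _ rfl)
  have hil : ∀ a b c : P, c ≤ a → c ≤ b → c ≤ inf a b := fun a b c h1 h2 =>
    (hinf a b).2 (by rintro x (rfl | rfl) <;> assumption)
  letI : Lattice P :=
    { (inferInstance : PartialOrder P) with
      sup := sup, le_sup_left := hls, le_sup_right := hrs
      sup_le := fun a b c h1 h2 => hsl a b c h1 h2
      inf := inf, inf_le_left := hli, inf_le_right := hri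
      le_inf := fun a b c h1 h2 => hil b c a h1 h2 }
  intro X hX B hB
  have hE : X ∩ pol perpQ B = ∅ := basis_inter_pol_empty perpQ_symm perpQ_irrefl hB
  have hpolsub : pol perpQ B ⊆ pol perpQ X := by
    rintro q hq x hx
    obtain ⟨⟨qb, qt⟩, hq_lt⟩ := q
    obtain ⟨⟨c, d⟩, hx_lt⟩ := x
    -- Step 1: find a maximal interval (s,t) around (c,d) whose quotients all lie in X
    set I : Set (P × P) :=
      {p | p.1 ≤ c ∧ d ≤ p.2 ∧ ∀ z : Quot1 P, p.1 ≤ z.1.1 → z.1.2 ≤ p.2 → z ∈ X} with hI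
    have hcdI : (c, d) ∈ I := by
      refine ⟨le_rfl, le_rfl, fun z h1 h2 => ?_⟩
      rw [← hX]
      intro y hy
      rcases hy ⟨(c, d), hx_lt⟩ hx with h | h
      · exact Or.inr (h.trans h1)
      · exact Or.inl (h2.trans h)
    obtain ⟨⟨s, t⟩, hstI, hmax⟩ := Set.Finite.exists_maximal_wrt
      (fun p : P × P => (OrderDual.toDual p.1, p.2)) I (Set.toFinite _) ⟨(c, d), hcdI⟩
    obtain ⟨hsc, hdt, hQI⟩ := hstI
    have hst : s < t := lt_of_le_of_lt hsc (lt_of_lt_of_le hx_lt hdt)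
    -- [s<t] itself lies in X
    have hstX : (⟨(s, t), hst⟩ : Quot1 P) ∈ X := hQI _ le_rfl le_rfl
    -- Step 2: trichotomy for members of X relative to the maximal interval
    have htri : ∀ p : Quot1 P, p ∈ X → p.1.2 ≤ s ∨ t ≤ p.1.1 ∨ (s ≤ p.1.1 ∧ p.1.2 ≤ t) := by
      intro p hp
      by_cases h1 : p.1.2 ≤ s
      · exact Or.inl h1
      by_cases h2 : t ≤ p.1.1
      · exact Or.inr (Or.inl h2)
      refine Or.inr (Or.inr ?_)
      have hhull : (s ⊓ p.1.1, t ⊔ p.1.2) ∈ I := by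
        refine ⟨inf_le_left.trans hsc, hdt.trans le_sup_left, fun z hz1 hz2 => ?_⟩
        rw [← hX]
        intro y hy
        have hy1 := hy ⟨(s, t), hst⟩ hstX
        have hy2 := hy p hp
        rcases hy1 with hys | hys
        · rcases hy2 with hyp | hyp
          · exact Or.inr ((le_inf hys hyp).trans hz1)
          · exact absurd ((hyp.trans_lt y.2).le.trans hys) h1
        · rcases hy2 with hyp | hyp
          · exact absurd ((hys.trans_lt y.2).le.trans hyp) h2
          · exact Or.inl (hz2.trans (sup_le hys hyp))
      have heq := hmax _ hhull ⟨inf_le_left, le_sup_left⟩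
      have heq1 : s = s ⊓ p.1.1 := congrArg (OrderDual.ofDual ∘ Prod.fst) heq
      have heq2 : t = t ⊔ p.1.2 := congrArg Prod.snd heq
      constructor
      · rw [heq1]; exact inf_le_right
      · rw [heq2]; exact le_sup_right
    -- Step 3: q is orthogonal to [s<t]
    have hqst : qt ≤ s ∨ t ≤ qb := by
      by_contra hcon
      push_neg at hcon
      obtain ⟨hbs, hta⟩ := hcon
      set Fm : Finset (Quot1 P) :=
        (Set.toFinite {p : Quot1 P | p ∈ B ∧ s ≤ p.1.1 ∧ p.1.2 ≤ t ∧ p.1.2 ≤ qb}).toFinset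
        with hFm
      set Fp : Finset (Quot1 P) :=
        (Set.toFinite {p : Quot1 P | p ∈ B ∧ s ≤ p.1.1 ∧ p.1.2 ≤ t ∧ qt ≤ p.1.1}).toFinset
        with hFp
      have hFm_mem : ∀ p : Quot1 P, p ∈ Fm ↔
          p ∈ B ∧ s ≤ p.1.1 ∧ p.1.2 ≤ t ∧ p.1.2 ≤ qb := by
        intro p; rw [hFm, Set.Finite.mem_toFinset]; rfl
      have hFp_mem : ∀ p : Quot1 P, p ∈ Fp ↔
          p ∈ B ∧ s ≤ p.1.1 ∧ p.1.2 ≤ t ∧ qt ≤ p.1.1 := by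
        intro p; rw [hFp, Set.Finite.mem_toFinset]; rfl
      set G : P := s ⊔ Fm.sup (fun p => p.1.2) with hG
      set H : P := t ⊓ Fp.inf (fun p => p.1.1) with hH
      have hsG : s ≤ G := le_sup_left
      have hHt : H ≤ t := inf_le_left
      have hGH : G ≤ H := by
        apply sup_le
        · exact le_inf hst.le (Finset.le_inf fun p hp => ((hFp_mem p).1 hp).2.1)
        · apply Finset.sup_le
          intro p hp
          obtain ⟨hpB, hpbs, hptt, hptq⟩ := (hFm_mem p).1 hp
          refine le_inf hptt (Finset.le_inf fun p' hp' => ?_)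
          obtain ⟨hp'B, hp'bs, hp't, hqp'⟩ := (hFp_mem p').1 hp'
          have hne : p ≠ p' := by
            rintro rfl
            exact absurd ((hqp'.trans_lt p.2).le.trans hptq) (not_le_of_gt hq_lt)
          rcases hB.2.1 hpB hp'B hne with h | h
          · exact h
          · exact absurd ((((hqp'.trans_lt p'.2).le.trans h).trans_lt p.2).le.trans hptq) (not_le_of_gt hq_lt)
      have hGneH : G ≠ H := by
        intro hEq
        rcases Finset.eq_empty_or_nonempty Fm with hFmE | ⟨p₀, hp₀⟩
        · have hGs : G = s := by rw [hG, hFmE, Finset.sup_empty, sup_bot_eq]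
          rcases Finset.eq_empty_or_nonempty Fp with hFpE | ⟨p₁, hp₁⟩
          · have hHt' : H = t := by rw [hH, hFpE, Finset.inf_empty, inf_top_eq]
            exact hst.ne (hGs ▸ hHt' ▸ hEq)
          · obtain ⟨hp₁B, hp₁bs, hp₁t, hqp₁⟩ := (hFp_mem p₁).1 hp₁
            have hbH : qt ≤ H :=
              le_inf ((hqp₁.trans_lt p₁.2).le.trans hp₁t)
                (Finset.le_inf fun p' hp' => ((hFp_mem p').1 hp').2.2.2)
            exact hbs (le_trans hbH (by rw [← hEq, hGs]))
        · obtain ⟨hp₀B, hp₀bs, hp₀t, hp₀q⟩ := (hFm_mem p₀).1 hp₀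
          have hGa : G ≤ qb := by
            apply sup_le (hp₀bs.trans ((p₀.2.le).trans hp₀q))
            exact Finset.sup_le fun p' hp' => ((hFm_mem p').1 hp').2.2.2
          rcases Finset.eq_empty_or_nonempty Fp with hFpE | ⟨p₁, hp₁⟩
          · have hHt' : H = t := by rw [hH, hFpE, Finset.inf_empty, inf_top_eq]
            exact hta (hHt' ▸ hEq ▸ hGa)
          · obtain ⟨hp₁B, hp₁bs, hp₁t, hqp₁⟩ := (hFp_mem p₁).1 hp₁
            have hbH : qt ≤ H :=
              le_inf ((hqp₁.trans_lt p₁.2).le.trans hp₁t)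
                (Finset.le_inf fun p' hp' => ((hFp_mem p').1 hp').2.2.2)
            exact absurd ((hbH.trans hEq.symm.le).trans hGa) (not_le_of_gt hq_lt)
      have hGH_lt : G < H := lt_of_le_of_ne hGH hGneH
      set q' : Quot1 P := ⟨(G, H), hGH_lt⟩ with hq'
      have hq'X : q' ∈ X := hQI q' hsG hHt
      have hq'pol : q' ∈ pol perpQ B := by
        intro p hp
        rcases htri p (hB.1 hp) with h | h | ⟨hpbs, hptt⟩
        · exact Or.inr (h.trans hsG)
        · exact Or.inl (hHt.trans h)
        · rcases hq p hp with h | h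
          · -- qt ≤ p.1.1 : p ∈ Fp
            have : p ∈ Fp := (hFp_mem p).2 ⟨hp, hpbs, hptt, h⟩
            exact Or.inl (show H ≤ (p : P × P).1 from inf_le_right.trans (Finset.inf_le this))
          · -- p.1.2 ≤ qb : p ∈ Fm
            have : p ∈ Fm := (hFm_mem p).2 ⟨hp, hpbs, hptt, h⟩
            refine Or.inr (show (p : P × P).2 ≤ G from ?_)
            rw [hG]
            exact (Finset.le_sup (f := fun p : Quot1 P => (p : P × P).2) this).trans le_sup_right
      exact absurd (show q' ∈ (∅ : Set (Quot1 P)) from hE ▸ (⟨hq'X, hq'pol⟩ : q' ∈ X ∩ pol perpQ B)) (Set.notMem_empty q')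
    -- Step 4: conclude
    rcases hqst with h | h
    · exact Or.inl (h.trans hsc)
    · exact Or.inr (hdt.trans h)
  have hpol_eq : pol perpQ B = pol perpQ X :=
    Set.Subset.antisymm hpolsub (fun y hy x hx => hy x (hB.1 hx))
  rw [hpol_eq, hX]


theorem no_lub_not_dacey {P : Type*} [PartialOrder P] [BoundedOrder P] [Fintype P]
    {a b : P} (hab : ¬ ∃ s, IsLUB {a, b} s) :
    ¬ (∀ X : Set (Quot1 P), IsOC perpQ X →
      ∀ B : Set (Quot1 P), IsBasis perpQ X B → pol perpQ (pol perpQ B) = X) := by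
  intro hD
  have hab' : ¬ a ≤ b := by
    intro h
    exact hab ⟨b, by rintro x (rfl | rfl) <;> [exact h; exact le_rfl],
      fun e he => he (Set.mem_insert_of_mem _ rfl)⟩
  have hba' : ¬ b ≤ a := by
    intro h
    exact hab ⟨a, by rintro x (rfl | rfl) <;> [exact le_rfl; exact h],
      fun e he => he (Set.mem_insert _ _)⟩
  set U : Set P := {e | a ≤ e ∧ b ≤ e} with hU
  set L : Set P := {h | ∀ e ∈ U, h ≤ e} with hLdef
  have hLU : ∀ z, z ∈ L → z ∈ U → False := by
    intro z hzL hzU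
    exact hab ⟨z, by rintro x (rfl | rfl) <;> [exact hzU.1; exact hzU.2],
      fun e he => hzL e ⟨he (Set.mem_insert _ _), he (Set.mem_insert_of_mem _ rfl)⟩⟩
  have haL : a ∈ L := fun e he => he.1
  have hbL : b ∈ L := fun e he => he.2
  have hbotlt : ∀ c : P, c ∈ L → (⊥ : P) < c ∨ c = ⊥ := fun c _ =>
    (lt_or_eq_of_le (bot_le : (⊥:P) ≤ c)).imp id Eq.symm
  have habot : (⊥ : P) < a := by
    rcases hbotlt a haL with h | h
    · exact h
    · exact absurd (h ▸ bot_le : a ≤ b) hab'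
  have hbbot : (⊥ : P) < b := by
    rcases hbotlt b hbL with h | h
    · exact h
    · exact absurd (h ▸ bot_le : b ≤ a) hba'
  -- X = tau L is orthoclosed
  have hXoc : IsOC perpQ (tau L) := by
    apply Set.Subset.antisymm
    · intro z hz
      show z.1.2 ∈ L
      intro e heU
      rcases eq_or_lt_of_le (le_top : e ≤ ⊤) with he | he
      · exact he ▸ le_top
      · have hy : (⟨(e, ⊤), he⟩ : Quot1 P) ∈ pol perpQ (tau L) := by
          intro x hx
          exact Or.inr (hx e heU)
        rcases hz _ hy with h | h
        · exact h
        · exact absurd (z.2.trans_le (le_top.trans h)) (lt_irrefl _)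
    · exact subset_polpol perpQ_symm (tau L)
  set qa : Quot1 P := ⟨(⊥, a), habot⟩ with hqa
  set qb : Quot1 P := ⟨(⊥, b), hbbot⟩ with hqb
  have hqaX : qa ∈ tau L := haL
  have hqbX : qb ∈ tau L := hbL
  obtain ⟨B, hqaB, hBbasis⟩ := exists_basis (r := perpQ) (tau L) {qa}
    (Set.singleton_subset_iff.2 hqaX) (Set.pairwise_singleton _ _)
  have hDac := hD (tau L) hXoc B hBbasis
  -- maximal top of B
  obtain ⟨t, ⟨pstar, hpstarB, hpstar⟩, hmaxT⟩ := Set.Finite.exists_maximal_wrt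
    (id : P → P) ((fun p : Quot1 P => p.1.2) '' B) (Set.toFinite _)
    ⟨a, qa, hqaB rfl, rfl⟩
  have htop : ∀ p ∈ B, p.1.2 ≤ t := by
    intro p hp
    by_cases hpe : p = pstar
    · subst hpe; exact hpstar.le
    · rcases hBbasis.2.1 hp hpstarB hpe with h | h
      · exact (h.trans_lt pstar.2).le.trans hpstar.le
      · have := hmaxT p.1.2 ⟨p, hp, rfl⟩ (hpstar.symm.le.trans (h.trans p.2.le))
        exact this.ge
  have htL : t ∈ L := hpstar ▸ (hBbasis.1 hpstarB : pstar.1.2 ∈ L)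
  have htU : t ∉ U := fun h => hLU t htL h
  have htlt : t < ⊤ := lt_of_le_of_ne le_top (fun h => htU ⟨h ▸ le_top, h ▸ le_top⟩)
  have hy : (⟨(t, ⊤), htlt⟩ : Quot1 P) ∈ pol perpQ B := fun p hp => Or.inr (htop p hp)
  have hqb' : qb ∈ pol perpQ (pol perpQ B) := hDac.symm ▸ hqbX
  rcases hqb' _ hy with h | h
  · exact htU ⟨htop qa (hqaB rfl), h⟩
  · exact hab' (le_top.trans (h.trans bot_le))

theorem no_glb_not_dacey {P : Type*} [PartialOrder P] [BoundedOrder P] [Fintype P]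
    {a b : P} (hab : ¬ ∃ i, IsGLB {a, b} i) :
    ¬ (∀ X : Set (Quot1 P), IsOC perpQ X →
      ∀ B : Set (Quot1 P), IsBasis perpQ X B → pol perpQ (pol perpQ B) = X) := by
  intro hD
  have hab' : ¬ a ≤ b := by
    intro h
    exact hab ⟨a, by rintro x (rfl | rfl) <;> [exact le_rfl; exact h],
      fun e he => he (Set.mem_insert _ _)⟩
  have hba' : ¬ b ≤ a := by
    intro h
    exact hab ⟨b, by rintro x (rfl | rfl) <;> [exact h; exact le_rfl],
      fun e he => he (Set.mem_insert_of_mem _ rfl)⟩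
  set U : Set P := {e | e ≤ a ∧ e ≤ b} with hU
  set L : Set P := {h | ∀ e ∈ U, e ≤ h} with hLdef
  have hLU : ∀ z, z ∈ L → z ∈ U → False := by
    intro z hzL hzU
    exact hab ⟨z, by rintro x (rfl | rfl) <;> [exact hzU.1; exact hzU.2],
      fun e he => hzL e ⟨he (Set.mem_insert _ _), he (Set.mem_insert_of_mem _ rfl)⟩⟩
  have haL : a ∈ L := fun e he => he.1
  have hbL : b ∈ L := fun e he => he.2
  have hatop : a < ⊤ := by
    rcases eq_or_lt_of_le (le_top : a ≤ ⊤) with h | h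
    · exact absurd (h ▸ le_top : b ≤ a) hba'
    · exact h
  have hbtop : b < ⊤ := by
    rcases eq_or_lt_of_le (le_top : b ≤ ⊤) with h | h
    · exact absurd (h ▸ le_top : a ≤ b) hab'
    · exact h
  have hXoc : IsOC perpQ (beta L) := by
    apply Set.Subset.antisymm
    · intro z hz
      show z.1.1 ∈ L
      intro e heU
      rcases eq_or_lt_of_le (bot_le : (⊥ : P) ≤ e) with he | he
      · exact he ▸ bot_le
      · have hy : (⟨(⊥, e), he⟩ : Quot1 P) ∈ pol perpQ (beta L) := by
          intro x hx
          exact Or.inl (hx e heU)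
        rcases hz _ hy with h | h
        · exact absurd (z.2.trans_le (h.trans bot_le)) (lt_irrefl _)
        · exact h
    · exact subset_polpol perpQ_symm (beta L)
  set qa : Quot1 P := ⟨(a, ⊤), hatop⟩ with hqa
  set qb : Quot1 P := ⟨(b, ⊤), hbtop⟩ with hqb
  have hqaX : qa ∈ beta L := haL
  have hqbX : qb ∈ beta L := hbL
  obtain ⟨B, hqaB, hBbasis⟩ := exists_basis (r := perpQ) (beta L) {qa}
    (Set.singleton_subset_iff.2 hqaX) (Set.pairwise_singleton _ _)
  have hDac := hD (beta L) hXoc B hBbasis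
  obtain ⟨t, ⟨pstar, hpstarB, hpstar⟩, hmaxT⟩ := Set.Finite.exists_maximal_wrt
    (OrderDual.toDual : P → Pᵒᵈ) ((fun p : Quot1 P => p.1.1) '' B) (Set.toFinite _)
    ⟨a, qa, hqaB rfl, rfl⟩
  have hbot : ∀ p ∈ B, t ≤ p.1.1 := by
    intro p hp
    by_cases hpe : p = pstar
    · subst hpe; exact hpstar.ge
    · rcases hBbasis.2.1 hp hpstarB hpe with h | h
      · have := hmaxT p.1.1 ⟨p, hp, rfl⟩ (OrderDual.toDual_le_toDual.2
          ((p.2.le.trans h).trans hpstar.le))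
        exact (OrderDual.toDual.injective this).le
      · exact hpstar.ge.trans (pstar.2.trans_le h).le
  have htL : t ∈ L := hpstar ▸ (hBbasis.1 hpstarB : pstar.1.1 ∈ L)
  have htU : t ∉ U := fun h => hLU t htL h
  have htlt : (⊥ : P) < t := lt_of_le_of_ne bot_le
    (fun h => htU ⟨h ▸ bot_le, h ▸ bot_le⟩)
  have hy : (⟨(⊥, t), htlt⟩ : Quot1 P) ∈ pol perpQ B := fun p hp => Or.inl (hbot p hp)
  have hqb' : qb ∈ pol perpQ (pol perpQ B) := hDac.symm ▸ hqbX
  rcases hqb' _ hy with h | h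
  · exact hba' (le_top.trans (h.trans bot_le))
  · exact htU ⟨hbot qa (hqaB rfl), h⟩

theorem lattice_iff_dacey_iff_orthomodular {P : Type*} [PartialOrder P] [BoundedOrder P]
    [Fintype P] :
    ((∀ a b : P, (∃ s, IsLUB {a, b} s) ∧ (∃ i, IsGLB {a, b} i)) ↔
      (∀ X : Set (Quot1 P), IsOC perpQ X →
        ∀ B : Set (Quot1 P), IsBasis perpQ X B → pol perpQ (pol perpQ B) = X)) ∧
    ((∀ a b : P, (∃ s, IsLUB {a, b} s) ∧ (∃ i, IsGLB {a, b} i)) ↔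
      (∀ X Y : Set (Quot1 P), IsOC perpQ X → IsOC perpQ Y → X ⊆ Y →
        Y = pol perpQ (pol perpQ X ∩ pol perpQ (Y ∩ pol perpQ X)))) := by
  have hDL : (∀ X : Set (Quot1 P), IsOC perpQ X →
      ∀ B : Set (Quot1 P), IsBasis perpQ X B → pol perpQ (pol perpQ B) = X) →
      (∀ a b : P, (∃ s, IsLUB {a, b} s) ∧ (∃ i, IsGLB {a, b} i)) := by
    intro hD a b
    constructor
    · by_contra h; exact no_lub_not_dacey h hD
    · by_contra h; exact no_glb_not_dacey h hD
  have iff1 : (∀ a b : P, (∃ s, IsLUB {a, b} s) ∧ (∃ i, IsGLB {a, b} i)) ↔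
      (∀ X : Set (Quot1 P), IsOC perpQ X →
        ∀ B : Set (Quot1 P), IsBasis perpQ X B → pol perpQ (pol perpQ B) = X) :=
    ⟨lattice_to_dacey, hDL⟩
  refine ⟨iff1, ?_⟩
  constructor
  · intro hl
    exact dacey_to_om perpQ_symm perpQ_irrefl (iff1.mp hl)
  · intro hm
    exact iff1.mpr (om_to_dacey perpQ_symm perpQ_irrefl hm)
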